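/- Let n ≥ 4 be even, let ω be a complex number with ω^n = 1 and |ω| = 1, and let 1 ≤ k ≤ n/2. For an even integer s, define A_{s,I} = Σ ω^{W(r)} over strictly increasing 2k-tuples r in [1,n] with S(r) = s and r_{2k} < n, and A_{s,B} = Σ ω^{W(r)} over those with S(r) = s and r_{2k} = n. Then (i) A_{s,I} = A_{−s,I}, (ii) A_{s,B} = (A_{s,B})^* (i.e., A_{s,B} is real), and consequently (iii) A_s^{(k)} + (A_{−s}^{(k)})^* is real, where A_s^{(k)} = A_{s,I} + A_{s,B}. -/

import Mathlib

open Complex Finset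

/-- Signature `S(r) = Σ_j (−1)^{j+r_j}` for a `2k`-tuple encoded as `r : Fin (2k) → Fin n`,
with paper (1-based) values `r_j = (r j) + 1` at paper positions `j + 1`. -/
def Sig {N twok : ℕ} (r : Fin twok → Fin N) : ℤ :=
  ∑ j : Fin twok, (-1) ^ ((j : ℕ) + (r j : ℕ))

/-- Weighted signature `W(r) = Σ_j (−1)^{j+r_j} r_j`. -/
def Wsig {N twok : ℕ} (r : Fin twok → Fin N) : ℤ :=
  ∑ j : Fin twok, (-1) ^ ((j : ℕ) + (r j : ℕ)) * ((r j : ℕ) + 1)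

-- `A_s^{(k)} = Σ_{r : S(r) = s} ω^{W(r)}`, over all strictly increasing `2k`-tuples in `[1,n]`.
open Classical in
noncomputable def Aamp (n k : ℕ) (ω : ℂ) (s : ℤ) : ℂ :=
  ∑ r ∈ Finset.univ.filter
      (fun r : Fin (2 * k) → Fin n => StrictMono r ∧ Sig r = s),
    ω ^ Wsig r

-- `A_{s,I}`: the part of `A_s^{(k)}` coming from tuples with largest entry `< n`
-- (for strictly increasing tuples, `r_{2k} < n` iff every entry is `< n`).
open Classical in
noncomputable def AampI (n k : ℕ) (ω : ℂ) (s : ℤ) : ℂ :=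
  ∑ r ∈ Finset.univ.filter
      (fun r : Fin (2 * k) → Fin n =>
        StrictMono r ∧ Sig r = s ∧ ∀ i, (r i : ℕ) + 1 < n),
    ω ^ Wsig r

-- `A_{s,B}`: the part of `A_s^{(k)}` coming from tuples with largest entry `= n`
-- (for tuples with entries in `[1,n]`, `r_{2k} = n` iff some entry equals `n`).
open Classical in
noncomputable def AampB (n k : ℕ) (ω : ℂ) (s : ℤ) : ℂ :=
  ∑ r ∈ Finset.univ.filter
      (fun r : Fin (2 * k) → Fin n =>
        StrictMono r ∧ Sig r = s ∧ ∃ i, (r i : ℕ) + 1 = n),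
    ω ^ Wsig r

lemma negpow_mod (a : ℕ) : ((-1:ℤ))^a = (-1)^(a % 2) := by
  conv_lhs => rw [← Nat.div_add_mod a 2]
  rw [pow_add, pow_mul]
  simp

lemma negpow_eq {a b : ℕ} (h : a % 2 = b % 2) : ((-1:ℤ))^a = (-1)^b := by
  rw [negpow_mod a, negpow_mod b, h]

lemma negpow_ne {a b : ℕ} (h : a % 2 ≠ b % 2) : ((-1:ℤ))^a = -(-1)^b := by
  rw [negpow_mod a, negpow_mod b]
  rcases Nat.mod_two_eq_zero_or_one a with ha | ha <;>
    rcases Nat.mod_two_eq_zero_or_one b with hb | hb <;>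
      simp [ha, hb] at h ⊢

lemma zpow_period {n : ℕ} {ω : ℂ} (hω0 : ω ≠ 0) (hωn : ω ^ n = 1) (b c : ℤ) :
    ω ^ (b + (n:ℤ) * c) = ω ^ b := by
  rw [zpow_add₀ hω0, zpow_mul]
  norm_cast
  rw [hωn]
  simp

def Rho (n k : ℕ) (r : Fin (2*k) → Fin n) : Fin (2*k) → Fin n :=
  fun j => ⟨n - 2 - (r j.rev : ℕ), by have := (r j.rev).isLt; omega⟩

def Tau (n k : ℕ) (r : Fin (2*k) → Fin n) : Fin (2*k) → Fin n :=
  fun j =>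
    if (j : ℕ) = 2*k - 1 then r j
    else ⟨n - 2 - (r ⟨2*k - 2 - (j:ℕ), by have := j.isLt; omega⟩ : ℕ),
      by have := (r (⟨2*k - 2 - (j:ℕ), by have := j.isLt; omega⟩ : Fin (2*k))).isLt; omega⟩

def pfun (k : ℕ) : Fin (2*k) → Fin (2*k) := fun j =>
  if (j:ℕ) = 2*k-1 then j else ⟨2*k-2-(j:ℕ), by have := j.isLt; omega⟩

lemma pfun_invol (k : ℕ) : Function.Involutive (pfun k) := by
  intro j
  by_cases h : (j:ℕ) = 2*k-1
  · simp [pfun, h]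
  · have hj := j.isLt
    have h2 : (2*k-2-(j:ℕ)) ≠ 2*k-1 := by omega
    apply Fin.ext
    simp [pfun, h, h2]
    omega

lemma rho_spec (n k : ℕ) (hn4 : 4 ≤ n) (hne : Even n) {r : Fin (2*k) → Fin n}
    (hmono : StrictMono r) (hlt : ∀ i, (r i : ℕ) + 1 < n) :
    StrictMono (Rho n k r) ∧ (∀ i, ((Rho n k r) i : ℕ) + 1 < n) ∧
    Rho n k (Rho n k r) = r ∧ Sig (Rho n k r) = - Sig r ∧
    Wsig (Rho n k r) = Wsig r - (n:ℤ) * Sig r := by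
  obtain ⟨m, hm⟩ := hne
  have hval : ∀ (q : Fin (2*k) → Fin n) (j : Fin (2*k)), ((Rho n k q) j : ℕ) = n - 2 - (q j.rev : ℕ) := fun _ _ => rfl
  refine ⟨?_, ?_, ?_, ?_, ?_⟩
  · intro a b hab
    have h1 : b.rev < a.rev := Fin.rev_lt_rev.mpr hab
    have h2 := hmono h1
    have h3 := hlt a.rev
    rw [Fin.lt_def] at h2 ⊢
    rw [hval, hval]
    omega
  · intro i
    rw [hval]
    have := hlt i.rev
    omega
  · funext j
    apply Fin.ext
    rw [hval, hval, Fin.rev_rev]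
    have := hlt j
    omega
  · have key : Sig (Rho n k r) = ∑ j : Fin (2*k), -((-1:ℤ)^((j:ℕ)+(r j:ℕ))) := by
      unfold Sig
      apply Fintype.sum_equiv Fin.revPerm
      intro j
      simp only [Fin.revPerm_apply]
      rw [hval]
      refine negpow_ne ?_
      have h1 := hlt j.rev
      have h2 : (j.rev : ℕ) = 2*k - ((j:ℕ)+1) := Fin.val_rev j
      have h3 := j.isLt
      omega
    rw [key, Finset.sum_neg_distrib]
    rfl
  · have key : Wsig (Rho n k r) = ∑ j : Fin (2*k),
        ((-1:ℤ)^((j:ℕ)+(r j:ℕ)) * ((r j:ℕ)+1) - (n:ℤ) * (-1)^((j:ℕ)+(r j:ℕ))) := by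
      unfold Wsig
      apply Fintype.sum_equiv Fin.revPerm
      intro j
      simp only [Fin.revPerm_apply]
      rw [hval]
      have h1 := hlt j.rev
      have h2 : (j.rev : ℕ) = 2*k - ((j:ℕ)+1) := Fin.val_rev j
      have h3 := j.isLt
      have hsgn : ((-1:ℤ))^((j:ℕ) + (n - 2 - (r j.rev : ℕ))) = -(-1)^(((j.rev:ℕ)) + (r j.rev : ℕ)) :=
        negpow_ne (by omega)
      have hcast : (((n - 2 - (r j.rev : ℕ) : ℕ)) : ℤ) = (n:ℤ) - 2 - (r j.rev : ℕ) := by omega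
      rw [hsgn, hcast]
      ring
    rw [key, Finset.sum_sub_distrib, ← Finset.mul_sum]
    rfl

lemma tau_spec (n k : ℕ) (hn4 : 4 ≤ n) (hne : Even n) (hk1 : 1 ≤ k) {r : Fin (2*k) → Fin n}
    (hmono : StrictMono r) (hex : ∃ i, (r i : ℕ) + 1 = n) :
    StrictMono (Tau n k r) ∧ (∃ i, ((Tau n k r) i : ℕ) + 1 = n) ∧
    Tau n k (Tau n k r) = r ∧ Sig (Tau n k r) = Sig r ∧
    Wsig (Tau n k r) = (n:ℤ) * Sig r + n - Wsig r := by
  obtain ⟨m, hm⟩ := hne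
  have hk : 1 ≤ 2*k := by omega
  set L : Fin (2*k) := ⟨2*k-1, by omega⟩ with hL
  have hLval : (L : ℕ) = 2*k-1 := rfl
  have hvL : ∀ (q : Fin (2*k) → Fin n) (j : Fin (2*k)), (j:ℕ) = 2*k-1 → Tau n k q j = q j := by
    intro q j hj
    simp [Tau, hj]
  have hvO : ∀ (q : Fin (2*k) → Fin n) (j i : Fin (2*k)), (j:ℕ) ≠ 2*k-1 → (i:ℕ) = 2*k-2-(j:ℕ) →
      ((Tau n k q) j : ℕ) = n - 2 - (q i : ℕ) := by
    intro q j i hj hi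
    have hi' : i = (⟨2*k-2-(j:ℕ), by have := j.isLt; omega⟩ : Fin (2*k)) := Fin.ext hi
    rw [hi']
    simp only [Tau, if_neg hj]
  have hlast : (r L : ℕ) = n - 1 := by
    obtain ⟨i, hi⟩ := hex
    have h1 : i ≤ L := by rw [Fin.le_def]; have := i.isLt; rw [hLval]; omega
    have h2 := hmono.monotone h1
    have h3 := (r L).isLt
    rw [Fin.le_def] at h2
    omega
  have hlt : ∀ j : Fin (2*k), (j:ℕ) ≠ 2*k-1 → (r j : ℕ) + 1 < n := by
    intro j hj
    have h1 : j < L := by rw [Fin.lt_def]; have := j.isLt; rw [hLval]; omega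
    have h2 := hmono h1
    rw [Fin.lt_def] at h2
    omega
  have hpv : ∀ j : Fin (2*k), (j:ℕ) ≠ 2*k-1 → ((pfun k j):ℕ) = 2*k-2-(j:ℕ) := by
    intro j hj; simp [pfun, hj]
  have hpv' : ∀ j : Fin (2*k), (j:ℕ) ≠ 2*k-1 → ((pfun k j):ℕ) ≠ 2*k-1 := by
    intro j hj; rw [hpv j hj]; have := j.isLt; omega
  have hpL : pfun k L = L := by simp [pfun, hLval]
  refine ⟨?_, ?_, ?_, ?_, ?_⟩
  · intro a b hab
    have hab' := hab
    rw [Fin.lt_def] at hab'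
    have ha : (a:ℕ) ≠ 2*k-1 := by have := b.isLt; omega
    have hA := hvO r a (⟨2*k-2-(a:ℕ), by have := a.isLt; omega⟩) ha rfl
    rw [Fin.lt_def]
    by_cases hb : (b:ℕ) = 2*k-1
    · rw [hvL r b hb]
      have hb' : b = L := Fin.ext (by rw [hLval]; exact hb)
      have h5 : (r b : ℕ) = n - 1 := by rw [hb']; exact hlast
      rw [hA]
      omega
    · have hB := hvO r b (⟨2*k-2-(b:ℕ), by have := b.isLt; omega⟩) hb rfl
      rw [hA, hB]
      have hmm : (⟨2*k-2-(b:ℕ), by have := b.isLt; omega⟩ : Fin (2*k)) < ⟨2*k-2-(a:ℕ), by have := a.isLt; omega⟩ := by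
        rw [Fin.lt_def]; simp only []; omega
      have h2 := hmono hmm
      rw [Fin.lt_def] at h2
      have h3 := hlt (⟨2*k-2-(a:ℕ), by have := a.isLt; omega⟩) (by simp only []; omega)
      omega
  · refine ⟨L, ?_⟩
    rw [hvL r L hLval, hlast]
    omega
  · funext j
    apply Fin.ext
    by_cases hj : (j:ℕ) = 2*k-1
    · rw [hvL _ j hj, hvL _ j hj]
    · have hj2 : (⟨2*k-2-(j:ℕ), by have := j.isLt; omega⟩ : Fin (2*k)).val ≠ 2*k-1 := by
        simp only []; have := j.isLt; omega
      rw [hvO (Tau n k r) j (⟨2*k-2-(j:ℕ), by have := j.isLt; omega⟩) hj rfl]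
      rw [hvO r (⟨2*k-2-(j:ℕ), by have := j.isLt; omega⟩) j hj2 (by simp only []; have := j.isLt; omega)]
      have := hlt j hj
      omega
  · unfold Sig
    apply Fintype.sum_equiv (Function.Involutive.toPerm (pfun k) (pfun_invol k))
    intro j
    simp only [Function.Involutive.coe_toPerm]
    by_cases hj : (j:ℕ) = 2*k-1
    · have h1 : pfun k j = j := by apply Fin.ext; simp [pfun, hj]
      rw [h1, hvL r j hj]
    · rw [hvO r j (pfun k j) hj (by have := hpv j hj; omega)]
      refine negpow_eq ?_
      have h1 := hlt (pfun k j) (hpv' j hj)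
      have h2 := hpv j hj
      have h3 := j.isLt
      omega
  · have key : Wsig (Tau n k r) = ∑ j : Fin (2*k),
        ((n:ℤ) * (-1)^((j:ℕ)+(r j:ℕ)) + (if j = L then (n:ℤ) else 0)
          - (-1)^((j:ℕ)+(r j:ℕ)) * ((r j:ℕ)+1)) := by
      unfold Wsig
      apply Fintype.sum_equiv (Function.Involutive.toPerm (pfun k) (pfun_invol k))
      intro j
      simp only [Function.Involutive.coe_toPerm]
      by_cases hj : (j:ℕ) = 2*k-1
      · have hjL : j = L := Fin.ext (by rw [hLval]; exact hj)
        rw [hjL]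
        simp only [hpL, hvL r L hLval, hlast, eq_self_iff_true, if_true]
        have hsg : ((-1:ℤ))^((L:ℕ) + (n-1)) = 1 := by
          have : ((-1:ℤ))^((L:ℕ) + (n-1)) = (-1)^0 := negpow_eq (by rw [hLval]; omega)
          rw [this, pow_zero]
        rw [hsg]
        have hc : ((n - 1 : ℕ) : ℤ) = (n:ℤ) - 1 := by omega
        rw [hc]
        ring
      · have hj2 := hpv j hj
        have hj3 := hpv' j hj
        have hjL : pfun k j ≠ L := by
          intro h; apply hj3; rw [h, hLval]
        rw [hvO r j (pfun k j) hj (by omega)]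
        simp only [hjL, if_false]
        have hx := hlt (pfun k j) hj3
        have hj4 := j.isLt
        have hsg : ((-1:ℤ))^((j:ℕ) + (n - 2 - ((r (pfun k j)):ℕ)))
            = (-1)^(((pfun k j):ℕ) + ((r (pfun k j)):ℕ)) := negpow_eq (by omega)
        have hc : ((n - 2 - ((r (pfun k j)):ℕ) : ℕ) : ℤ) = (n:ℤ) - 2 - ((r (pfun k j)):ℕ) := by omega
        rw [hsg, hc]
        ring
    rw [key, Finset.sum_sub_distrib, Finset.sum_add_distrib, ← Finset.mul_sum]
    have hite : ∑ j : Fin (2*k), (if j = L then (n:ℤ) else 0) = n := by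
      rw [Finset.sum_ite_eq' Finset.univ L (fun _ => (n:ℤ))]
      simp
    rw [hite]
    rfl

theorem stmt14 (n k : ℕ) (hn4 : 4 ≤ n) (hne : Even n) (hk1 : 1 ≤ k) (hk2 : k ≤ n / 2)
    (ω : ℂ) (hωn : ω ^ n = 1) (hωabs : ‖ω‖ = 1)
    (s : ℤ) (hs : Even s) :
    Aamp n k ω s = AampI n k ω s + AampB n k ω s ∧
    AampI n k ω s = AampI n k ω (-s) ∧
    AampB n k ω s = (starRingEnd ℂ) (AampB n k ω s) ∧
    (Aamp n k ω s + (starRingEnd ℂ) (Aamp n k ω (-s))).im = 0 := by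
  classical
  have hω0 : ω ≠ 0 := by
    intro h
    rw [h] at hωabs
    simp at hωabs
  have hconj : ∀ a : ℤ, (starRingEnd ℂ) (ω ^ a) = ω ^ (-a) := by
    intro a
    rw [map_zpow₀, ← Complex.inv_eq_conj hωabs, inv_zpow, ← zpow_neg]
  have part1 : ∀ t : ℤ, Aamp n k ω t = AampI n k ω t + AampB n k ω t := by
    intro t
    rw [Aamp, AampI, AampB]
    rw [← Finset.sum_filter_add_sum_filter_not
      (Finset.univ.filter (fun r : Fin (2*k) → Fin n => StrictMono r ∧ Sig r = t))
      (fun r => ∀ i, (r i : ℕ) + 1 < n)]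
    congr 1
    · rw [Finset.filter_filter]
      refine Finset.sum_congr (Finset.filter_congr ?_) (fun _ _ => rfl)
      intro r _
      constructor
      · rintro ⟨⟨h1, h2⟩, h3⟩
        exact ⟨h1, h2, h3⟩
      · rintro ⟨h1, h2, h3⟩
        exact ⟨⟨h1, h2⟩, h3⟩
    · rw [Finset.filter_filter]
      refine Finset.sum_congr (Finset.filter_congr ?_) (fun _ _ => rfl)
      intro r _
      constructor
      · rintro ⟨⟨h1, h2⟩, h3⟩
        push_neg at h3
        obtain ⟨i, hi⟩ := h3
        exact ⟨h1, h2, i, by have := (r i).isLt; omega⟩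
      · rintro ⟨h1, h2, i, hi⟩
        refine ⟨⟨h1, h2⟩, ?_⟩
        push_neg
        exact ⟨i, by omega⟩
  have part2 : ∀ t : ℤ, AampI n k ω t = AampI n k ω (-t) := by
    intro t
    rw [AampI, AampI]
    apply Finset.sum_nbij' (i := Rho n k) (j := Rho n k)
    · intro r hr
      simp only [Finset.mem_filter, Finset.mem_univ, true_and] at hr ⊢
      obtain ⟨h1, h2, h3⟩ := hr
      obtain ⟨m1, m2, _, m4, _⟩ := rho_spec n k hn4 hne h1 h3
      exact ⟨m1, by rw [m4, h2], m2⟩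
    · intro r hr
      simp only [Finset.mem_filter, Finset.mem_univ, true_and] at hr ⊢
      obtain ⟨h1, h2, h3⟩ := hr
      obtain ⟨m1, m2, _, m4, _⟩ := rho_spec n k hn4 hne h1 h3
      exact ⟨m1, by rw [m4, h2]; ring, m2⟩
    · intro r hr
      simp only [Finset.mem_filter, Finset.mem_univ, true_and] at hr
      exact (rho_spec n k hn4 hne hr.1 hr.2.2).2.2.1
    · intro r hr
      simp only [Finset.mem_filter, Finset.mem_univ, true_and] at hr
      exact (rho_spec n k hn4 hne hr.1 hr.2.2).2.2.1
    · intro r hr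
      simp only [Finset.mem_filter, Finset.mem_univ, true_and] at hr
      obtain ⟨h1, h2, h3⟩ := hr
      obtain ⟨_, _, _, _, m5⟩ := rho_spec n k hn4 hne h1 h3
      rw [m5, h2]
      have : Wsig r - (n:ℤ) * t = Wsig r + (n:ℤ) * (-t) := by ring
      rw [this, zpow_period hω0 hωn]
  have part3 : ∀ t : ℤ, AampB n k ω t = (starRingEnd ℂ) (AampB n k ω t) := by
    intro t
    rw [AampB, map_sum]
    apply Finset.sum_nbij' (i := Tau n k) (j := Tau n k)
    · intro r hr
      simp only [Finset.mem_filter, Finset.mem_univ, true_and] at hr ⊢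
      obtain ⟨h1, h2, h3⟩ := hr
      obtain ⟨m1, m2, _, m4, _⟩ := tau_spec n k hn4 hne hk1 h1 h3
      exact ⟨m1, by rw [m4, h2], m2⟩
    · intro r hr
      simp only [Finset.mem_filter, Finset.mem_univ, true_and] at hr ⊢
      obtain ⟨h1, h2, h3⟩ := hr
      obtain ⟨m1, m2, _, m4, _⟩ := tau_spec n k hn4 hne hk1 h1 h3
      exact ⟨m1, by rw [m4, h2], m2⟩
    · intro r hr
      simp only [Finset.mem_filter, Finset.mem_univ, true_and] at hr
      exact (tau_spec n k hn4 hne hk1 hr.1 hr.2.2).2.2.1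
    · intro r hr
      simp only [Finset.mem_filter, Finset.mem_univ, true_and] at hr
      exact (tau_spec n k hn4 hne hk1 hr.1 hr.2.2).2.2.1
    · intro r hr
      simp only [Finset.mem_filter, Finset.mem_univ, true_and] at hr
      obtain ⟨h1, h2, h3⟩ := hr
      obtain ⟨_, _, _, _, m5⟩ := tau_spec n k hn4 hne hk1 h1 h3
      rw [hconj, m5, h2]
      have : -((n:ℤ) * t + n - Wsig r) = Wsig r + (n:ℤ) * (-t - 1) := by ring
      rw [this, zpow_period hω0 hωn]
  refine ⟨part1 s, part2 s, part3 s, ?_⟩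
  have hIb : (AampB n k ω s).im = 0 := Complex.conj_eq_iff_im.mp (part3 s).symm
  have hIc : (AampB n k ω (-s)).im = 0 := Complex.conj_eq_iff_im.mp (part3 (-s)).symm
  rw [part1 s, part1 (-s), map_add, ← part2 s, ← part3 (-s)]
  simp only [Complex.add_im, Complex.conj_im, hIb, hIc]
  ring
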